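/- For every integer n ≥ 2, the chromatic number of the shift graph S(n) is at least log₂ n: any proper coloring of S(n) with c colors satisfies 2^c ≥ n. -/

import Mathlib

/-- The shift graph `S(n)`: vertices are pairs `(i, j)` with `1 ≤ i < j ≤ n`,
and `(i, j)` is adjacent to `(k, l)` iff `j = k` or `l = i`. -/
def shiftGraph (n : ℕ) :
    SimpleGraph {p : ℕ × ℕ // 1 ≤ p.1 ∧ p.1 < p.2 ∧ p.2 ≤ n} where
  Adj p q := p.1.2 = q.1.1 ∨ q.1.2 = p.1.1
  symm := by
    constructor
    rintro p q (h | h)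
    · exact Or.inr h
    · exact Or.inl h
  loopless := by
    constructor
    rintro ⟨⟨i, j⟩, h1, h2, h3⟩ h
    simp only at h
    omega

theorem stmt_13 (n c : ℕ) (hn : 2 ≤ n)
    (χ : (shiftGraph n).Coloring (Fin c)) : n ≤ 2 ^ c := by
  classical
  -- to each i assign the set of colors of edges (i, j) with j > i
  set f : ℕ → Finset (Fin c) := fun i =>
    Finset.univ.filter (fun col =>
      ∃ p : {p : ℕ × ℕ // 1 ≤ p.1 ∧ p.1 < p.2 ∧ p.2 ≤ n}, p.1.1 = i ∧ χ p = col)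
    with hf
  have hinj : Set.InjOn f (Finset.Icc 1 n) := by
    intro a ha b hb hab
    simp only [Finset.coe_Icc, Set.mem_Icc] at ha hb
    by_contra hne
    -- wlog a < b
    rcases Nat.lt_or_ge a b with h | h
    · have hv : 1 ≤ a ∧ a < b ∧ b ≤ n := ⟨ha.1, h, hb.2⟩
      have h1 : χ ⟨(a, b), hv⟩ ∈ f a := by
        simp only [hf, Finset.mem_filter, Finset.mem_univ, true_and]
        exact ⟨⟨(a, b), hv⟩, rfl, rfl⟩
      rw [hab] at h1
      simp only [hf, Finset.mem_filter, Finset.mem_univ, true_and] at h1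
      obtain ⟨⟨⟨i, j⟩, hp⟩, hpi, hpc⟩ := h1
      simp only at hpi
      have hadj : (shiftGraph n).Adj ⟨(a, b), hv⟩ ⟨(i, j), hp⟩ := Or.inl hpi.symm
      exact χ.valid hadj hpc.symm
    · have hlt : b < a := lt_of_le_of_ne h (Ne.symm hne)
      have hv : 1 ≤ b ∧ b < a ∧ a ≤ n := ⟨hb.1, hlt, ha.2⟩
      have h1 : χ ⟨(b, a), hv⟩ ∈ f b := by
        simp only [hf, Finset.mem_filter, Finset.mem_univ, true_and]
        exact ⟨⟨(b, a), hv⟩, rfl, rfl⟩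
      rw [← hab] at h1
      simp only [hf, Finset.mem_filter, Finset.mem_univ, true_and] at h1
      obtain ⟨⟨⟨i, j⟩, hp⟩, hpi, hpc⟩ := h1
      simp only at hpi
      have hadj : (shiftGraph n).Adj ⟨(b, a), hv⟩ ⟨(i, j), hp⟩ := Or.inl hpi.symm
      exact χ.valid hadj hpc.symm
  have hcard := Finset.card_le_card_of_injOn f (fun x _ => Finset.mem_univ (f x)) hinj
  simpa [Nat.card_Icc, Finset.card_univ] using hcard
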